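/- Assume the Ball–Carlen–Lieb inequality: for all matrices Z, W ∈ C^{N×N} with Tr[|Z|^{p-1}ZW†] = Tr[|Z|^{p-1}WZ†] = 0 one has ‖Z+W‖_p^2 ≥ ‖Z‖_p^2 + (p-1)‖W‖_p^2, for p ∈ [1,2]. Then for matrices Z_0,…,Z_{r-1} with Tr[|Z_j|^{p-1} Z_j Z_k†] = Tr[|Z_j|^{p-1} Z_k Z_j†] = 0 for all j ≠ k, the inequality ‖∑_{j=0}^{r-1} Z_j‖_p^2 ≥ ‖Z_0‖_p^2 + ζ_r(p) ∑_{j=1}^{r-1} ‖Z_j‖_p^2 holds, where ζ_r(p) = (p-1)(1-(p-1)^{r-1})/((r-1)(2-p)). -/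

import Mathlib

open Matrix

/-- The Schatten `p`-norm of a complex `d × d` matrix. -/
noncomputable def schattenNorm {d : ℕ} (p : ℝ) (A : Matrix (Fin d) (Fin d) ℂ) : ℝ :=
  (∑ i, ((Matrix.isHermitian_conjTranspose_mul_self A).eigenvalues i) ^ (p / 2)) ^ (1 / p)

/-- Real power of a Hermitian matrix, via the spectral decomposition. -/
noncomputable def hermRpow {d : ℕ} (A : Matrix (Fin d) (Fin d) ℂ) (hA : A.IsHermitian)
    (t : ℝ) : Matrix (Fin d) (Fin d) ℂ :=
  (hA.eigenvectorUnitary : Matrix (Fin d) (Fin d) ℂ) *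
    Matrix.diagonal (fun i => ((hA.eigenvalues i ^ t : ℝ) : ℂ)) *
      (hA.eigenvectorUnitary : Matrix (Fin d) (Fin d) ℂ)ᴴ

/-- `|Z|^t := (Z Zᴴ)^{t/2}`, defined through the spectral decomposition of `Z Zᴴ`. -/
noncomputable def absRpow {d : ℕ} (Z : Matrix (Fin d) (Fin d) ℂ) (t : ℝ) :
    Matrix (Fin d) (Fin d) ℂ :=
  hermRpow (Z * Zᴴ) (Matrix.isHermitian_mul_conjTranspose_self Z) (t / 2)

/-- The constant `ζ_r(p)`. -/
noncomputable def zetaConst (r : ℕ) (p : ℝ) : ℝ :=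
  if p = 2 then 1 else (p - 1) * (1 - (p - 1) ^ (r - 1)) / (((r : ℝ) - 1) * (2 - p))
open Matrix

lemma bcl_chain {N : ℕ} (p : ℝ) (hp1 : 1 ≤ p)
    (BCL : ∀ Z W : Matrix (Fin N) (Fin N) ℂ,
      (absRpow Z (p - 1) * Z * Wᴴ).trace = 0 →
      (absRpow Z (p - 1) * W * Zᴴ).trace = 0 →
      schattenNorm p (Z + W) ^ 2 ≥ schattenNorm p Z ^ 2 + (p - 1) * schattenNorm p W ^ 2) :
    ∀ (m : ℕ) (g : Fin m → Matrix (Fin N) (Fin N) ℂ),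
      (∀ i k : Fin m, i ≠ k →
        (absRpow (g i) (p - 1) * g i * (g k)ᴴ).trace = 0 ∧
        (absRpow (g i) (p - 1) * g k * (g i)ᴴ).trace = 0) →
      schattenNorm p (∑ i, g i) ^ 2 ≥ ∑ i, (p - 1) ^ i.val * schattenNorm p (g i) ^ 2 := by
  intro m
  induction m with
  | zero => intro g _; simp [ge_iff_le]; positivity
  | succ m ih =>
    intro g horth
    have hsum : ∑ i : Fin (m + 1), g i = g 0 + ∑ i : Fin m, g i.succ :=
      Fin.sum_univ_succ g
    have h1 : (absRpow (g 0) (p - 1) * g 0 * (∑ i : Fin m, g i.succ)ᴴ).trace = 0 := by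
      rw [conjTranspose_sum, Matrix.mul_sum, trace_sum]
      refine Finset.sum_eq_zero fun i _ => ?_
      exact (horth 0 i.succ (Fin.succ_ne_zero i).symm).1
    have h2 : (absRpow (g 0) (p - 1) * (∑ i : Fin m, g i.succ) * (g 0)ᴴ).trace = 0 := by
      rw [Matrix.mul_sum, Matrix.sum_mul, trace_sum]
      refine Finset.sum_eq_zero fun i _ => ?_
      exact (horth 0 i.succ (Fin.succ_ne_zero i).symm).2
    have hb := BCL (g 0) (∑ i : Fin m, g i.succ) h1 h2
    have hi := ih (fun i => g i.succ) (fun i k hik =>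
      horth i.succ k.succ (fun h => hik (Fin.succ_injective m h)))
    have hp0 : (0:ℝ) ≤ p - 1 := by linarith
    rw [hsum]
    rw [Fin.sum_univ_succ (fun i : Fin (m+1) => (p - 1) ^ i.val * schattenNorm p (g i) ^ 2)]
    have hmul : (p - 1) * (∑ i : Fin m, (p - 1) ^ i.val * schattenNorm p (g i.succ) ^ 2)
        ≤ (p - 1) * schattenNorm p (∑ i : Fin m, g i.succ) ^ 2 :=
      mul_le_mul_of_nonneg_left hi hp0
    rw [Finset.mul_sum] at hmul
    simp only [Fin.val_succ, Fin.val_zero, pow_zero, one_mul]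
    calc schattenNorm p (g 0) ^ 2 + ∑ i : Fin m, (p - 1) ^ (i.val + 1) * schattenNorm p (g i.succ) ^ 2
        ≤ schattenNorm p (g 0) ^ 2 + (p - 1) * schattenNorm p (∑ i : Fin m, g i.succ) ^ 2 := by
          refine add_le_add le_rfl ?_
          refine le_trans (le_of_eq ?_) hmul
          refine Finset.sum_congr rfl fun i _ => ?_
          ring
      _ ≤ schattenNorm p (g 0 + ∑ i : Fin m, g i.succ) ^ 2 := hb

set_option maxHeartbeats 1000000 in
theorem iterated_ball_carlen_lieb {N : ℕ} (r : ℕ) (hr : 2 ≤ r)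
    (p : ℝ) (hp1 : 1 ≤ p) (hp2 : p ≤ 2)
    (BCL : ∀ Z W : Matrix (Fin N) (Fin N) ℂ,
      (absRpow Z (p - 1) * Z * Wᴴ).trace = 0 →
      (absRpow Z (p - 1) * W * Zᴴ).trace = 0 →
      schattenNorm p (Z + W) ^ 2 ≥ schattenNorm p Z ^ 2 + (p - 1) * schattenNorm p W ^ 2)
    (Z : Fin r → Matrix (Fin N) (Fin N) ℂ)
    (horth : ∀ j k : Fin r, j ≠ k →
      (absRpow (Z j) (p - 1) * Z j * (Z k)ᴴ).trace = 0 ∧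
      (absRpow (Z j) (p - 1) * Z k * (Z j)ᴴ).trace = 0) :
    schattenNorm p (∑ j : Fin r, Z j) ^ 2
      ≥ schattenNorm p (Z ⟨0, by omega⟩) ^ 2
        + zetaConst r p * ∑ j ∈ Finset.univ.filter (fun j : Fin r => j.val ≠ 0),
            schattenNorm p (Z j) ^ 2 := by
  obtain ⟨m, rfl⟩ : ∃ m, r = m + 1 := ⟨r - 1, by omega⟩
  have hm : 1 ≤ m := by omega
  haveI : NeZero m := ⟨by omega⟩
  simp only [Fin.mk_zero]
  set S : Matrix (Fin N) (Fin N) ℂ := ∑ j : Fin (m + 1), Z j with hS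
  set A : ℝ := schattenNorm p (Z 0) ^ 2 with hA
  set f : Fin m → ℝ := fun j => schattenNorm p (Z j.succ) ^ 2 with hf
  set T : ℝ := ∑ j : Fin m, f j with hT
  set C : ℝ := ∑ i : Fin m, (p - 1) ^ (i.val + 1) with hC
  set B : Fin m → ℝ := fun s => A + ∑ i : Fin m, (p - 1) ^ (i.val + 1) * f (i + s) with hB
  -- orderings
  set e : Fin m → Fin (m + 1) → Fin (m + 1) :=
    fun s k => Fin.cases 0 (fun i => (i + s).succ) k with he
  have he_inj : ∀ s : Fin m, Function.Injective (e s) := by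
    intro s a b h
    induction a using Fin.cases with
    | zero =>
      induction b using Fin.cases with
      | zero => rfl
      | succ j => simp only [he, Fin.cases_zero, Fin.cases_succ] at h
                  exact absurd h.symm (Fin.succ_ne_zero _)
    | succ i =>
      induction b using Fin.cases with
      | zero => simp only [he, Fin.cases_zero, Fin.cases_succ] at h
                exact absurd h (Fin.succ_ne_zero _)
      | succ j =>
        simp only [he, Fin.cases_succ] at h
        have := add_right_cancel (Fin.succ_injective _ h)
        rw [this]
  -- chain inequality for each cyclic ordering
  have key : ∀ s : Fin m, schattenNorm p S ^ 2 ≥ B s := by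
    intro s
    have horth' : ∀ i k : Fin (m + 1), i ≠ k →
        (absRpow (Z (e s i)) (p - 1) * Z (e s i) * (Z (e s k))ᴴ).trace = 0 ∧
        (absRpow (Z (e s i)) (p - 1) * Z (e s k) * (Z (e s i))ᴴ).trace = 0 :=
      fun i k hik => horth (e s i) (e s k) (fun h => hik (he_inj s h))
    have hchain := bcl_chain p hp1 BCL (m + 1) (fun k => Z (e s k)) horth'
    have hsum : (∑ k : Fin (m + 1), Z (e s k)) = S := by
      rw [hS]
      exact Fintype.sum_bijective (e s)
        (Finite.injective_iff_bijective.mp (he_inj s)) _ _ (fun k => rfl)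
    rw [hsum] at hchain
    refine le_trans (le_of_eq ?_) hchain
    rw [hB]
    rw [Fin.sum_univ_succ (fun k : Fin (m + 1) =>
      (p - 1) ^ k.val * schattenNorm p (Z (e s k)) ^ 2)]
    simp only [he, Fin.cases_zero, Fin.cases_succ, Fin.val_zero, pow_zero, one_mul,
      Fin.val_succ, hA, hf]
  -- sum over all cyclic shifts
  have hsumkey : ∑ s : Fin m, B s ≤ ∑ s : Fin m, schattenNorm p S ^ 2 :=
    Finset.sum_le_sum fun s _ => key s
  have hL : ∑ s : Fin m, schattenNorm p S ^ 2 = (m : ℝ) * schattenNorm p S ^ 2 := by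
    rw [Finset.sum_const, Finset.card_univ, Fintype.card_fin, nsmul_eq_mul]
  have hR : ∑ s : Fin m, B s = (m : ℝ) * A + C * T := by
    rw [hB]
    rw [Finset.sum_add_distrib, Finset.sum_const, Finset.card_univ, Fintype.card_fin,
      nsmul_eq_mul, Finset.sum_comm]
    congr 1
    rw [hC, Finset.sum_mul]
    refine Finset.sum_congr rfl fun i _ => ?_
    rw [← Finset.mul_sum]
    refine congrArg (fun x => (p - 1) ^ (i.val + 1) * x) ?_
    rw [hT]
    exact Fintype.sum_equiv (Equiv.addLeft i) _ _ (fun s => rfl)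
  -- value of C
  have hCzeta : C = (m : ℝ) * zetaConst (m + 1) p := by
    rw [hC, Fin.sum_univ_eq_sum_range (fun i => (p - 1) ^ (i + 1)) m]
    unfold zetaConst
    by_cases hp : p = 2
    · subst hp
      rw [if_pos rfl, show (2:ℝ) - 1 = 1 by norm_num]
      simp
    · rw [if_neg hp]
      have h1 : p - 1 ≠ 1 := fun h => hp (by linarith)
      have hfac : ∑ i ∈ Finset.range m, (p - 1) ^ (i + 1)
          = (p - 1) * ∑ i ∈ Finset.range m, (p - 1) ^ i := by
        rw [Finset.mul_sum]; exact Finset.sum_congr rfl fun i _ => by ring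
      rw [hfac, geom_sum_eq h1]
      have h2 : (2 : ℝ) - p ≠ 0 := fun h => hp (by linarith)
      have h1' : p - 1 - 1 ≠ 0 := fun h => hp (by linarith)
      have hm0 : (m : ℝ) ≠ 0 := Nat.cast_ne_zero.mpr (by omega)
      simp only [Nat.add_sub_cancel]
      push_cast
      rw [add_sub_cancel_right]
      field_simp
      ring
  -- the filtered sum equals T
  have hT' : ∑ j ∈ Finset.univ.filter (fun j : Fin (m + 1) => j.val ≠ 0),
      schattenNorm p (Z j) ^ 2 = T := by
    have hsplit := Finset.sum_filter_add_sum_filter_not Finset.univ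
      (fun j : Fin (m + 1) => j.val ≠ 0) (fun j => schattenNorm p (Z j) ^ 2)
    have h0 : Finset.univ.filter (fun j : Fin (m + 1) => ¬ j.val ≠ 0) = {0} := by
      ext j
      simp only [Finset.mem_filter, Finset.mem_univ, true_and, not_not, Finset.mem_singleton,
        Fin.ext_iff, Fin.val_zero]
    rw [h0, Finset.sum_singleton,
      Fin.sum_univ_succ (fun j : Fin (m + 1) => schattenNorm p (Z j) ^ 2)] at hsplit
    rw [hT, hf]
    linarith
  -- conclude
  rw [hT']
  have hmpos : (0 : ℝ) < m := by exact_mod_cast Nat.pos_of_ne_zero (by omega)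
  have H : (m : ℝ) * A + C * T ≤ (m : ℝ) * schattenNorm p S ^ 2 := by
    rw [← hR, ← hL]; exact hsumkey
  rw [hCzeta] at H
  have H2 : (m : ℝ) * (A + zetaConst (m + 1) p * T)
      ≤ (m : ℝ) * (schattenNorm p S ^ 2) := by linarith [H]
  exact le_of_mul_le_mul_left H2 hmpos
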